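/- With K₁, K₂ operator-valued positive definite kernels on Λ, define (K₁ ∗ K₂)(λ, μ) := K₁(λ, μ) ⊗ K₂(λ, μ). Then the formula (πF)(λ) := F(λ, λ) defines a coisometry π from H_{K₁} ⊗ H_{K₂} onto the RKHS H_{K₁∗K₂}, with kernel ker π = N = {F : F(λ,λ) = 0 for all λ}, and π*((K₁∗K₂)(·, μ)(x₁ ⊗ x₂)) = K₁(·, μ)x₁ ⊗ K₂(·, μ)x₂. -/

import Mathlib

open Matrix ContinuousLinearMap
open scoped InnerProductSpace Kronecker

/-- Restriction to the diagonal defines a coisometry `π` from `H_{K₁} ⊗ H_{K₂}`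
(the RKHS `H` on `Λ × Λ` with kernel `K₁ ⊗ K₂`) onto the RKHS `H'` of the pointwise
tensor product kernel `(K₁ ∗ K₂)(a, b) = K₁(a,b) ⊗ K₂(a,b)`, with
`ker π = N = {F : F(a,a) = 0 ∀ a}` and
`π*((K₁∗K₂)(·,μ)(x₁ ⊗ x₂)) = K₁(·,μ)x₁ ⊗ K₂(·,μ)x₂`. -/
theorem diagonal_restriction_coisometry {Λ : Type*} {n m : ℕ} {H H' : Type*}
    [NormedAddCommGroup H] [InnerProductSpace ℂ H] [CompleteSpace H]
    [NormedAddCommGroup H'] [InnerProductSpace ℂ H'] [CompleteSpace H']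
    (K₁ : Λ → Λ → Matrix (Fin n) (Fin n) ℂ)
    (K₂ : Λ → Λ → Matrix (Fin m) (Fin m) ℂ)
    -- `H` : the RKHS on `Λ × Λ` with kernel `K₁ ⊗ K₂`
    (ev : H →ₗ[ℂ] ((Λ × Λ) → EuclideanSpace ℂ (Fin n × Fin m)))
    (kfun : (Λ × Λ) → EuclideanSpace ℂ (Fin n × Fin m) → H)
    (hrep : ∀ (F : H) (p : Λ × Λ) (x : EuclideanSpace ℂ (Fin n × Fin m)),
      ⟪ev F p, x⟫_ℂ = ⟪F, kfun p x⟫_ℂ)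
    (hker : ∀ (q : Λ × Λ) (x : EuclideanSpace ℂ (Fin n × Fin m)) (p : Λ × Λ),
      ev (kfun q x) p = Matrix.toEuclideanLin ((K₁ p.1 q.1) ⊗ₖ (K₂ p.2 q.2)) x)
    (htot : (Submodule.span ℂ
      {h : H | ∃ (q : Λ × Λ) (x : EuclideanSpace ℂ (Fin n × Fin m)),
        h = kfun q x}).topologicalClosure = ⊤)
    -- `H'` : the RKHS on `Λ` with kernel `K₁ ∗ K₂`
    (ev' : H' →ₗ[ℂ] (Λ → EuclideanSpace ℂ (Fin n × Fin m)))
    (kfun' : Λ → EuclideanSpace ℂ (Fin n × Fin m) → H')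
    (hrep' : ∀ (F : H') (a : Λ) (x : EuclideanSpace ℂ (Fin n × Fin m)),
      ⟪ev' F a, x⟫_ℂ = ⟪F, kfun' a x⟫_ℂ)
    (hker' : ∀ (b : Λ) (x : EuclideanSpace ℂ (Fin n × Fin m)) (a : Λ),
      ev' (kfun' b x) a = Matrix.toEuclideanLin ((K₁ a b) ⊗ₖ (K₂ a b)) x)
    (htot' : (Submodule.span ℂ
      {h : H' | ∃ (b : Λ) (x : EuclideanSpace ℂ (Fin n × Fin m)),
        h = kfun' b x}).topologicalClosure = ⊤) :
    ∃ π : H →L[ℂ] H',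
      (∀ y : H', ‖ContinuousLinearMap.adjoint π y‖ = ‖y‖) ∧
      (∀ (F : H) (a : Λ), ev' (π F) a = ev F (a, a)) ∧
      (LinearMap.ker (π : H →ₗ[ℂ] H')
        = ⨅ a : Λ, LinearMap.ker
            ((LinearMap.proj (R := ℂ)
              (φ := fun _ : Λ × Λ => EuclideanSpace ℂ (Fin n × Fin m))
              ((a, a) : Λ × Λ)).comp ev)) ∧
      (∀ (μ : Λ) (x₁ : Fin n → ℂ) (x₂ : Fin m → ℂ),
        ContinuousLinearMap.adjoint π
            (kfun' μ ((WithLp.toLp 2 (fun p : Fin n × Fin m => x₁ p.1 * x₂ p.2) : EuclideanSpace ℂ (Fin n × Fin m))))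
          = kfun (μ, μ) ((WithLp.toLp 2 (fun p : Fin n × Fin m => x₁ p.1 * x₂ p.2) :
              EuclideanSpace ℂ (Fin n × Fin m)))) := by
  classical
  -- Gram equality on generators
  have hgen : ∀ i j : Λ × (EuclideanSpace ℂ (Fin n × Fin m)),
      ⟪kfun (i.1, i.1) i.2, kfun (j.1, j.1) j.2⟫_ℂ = ⟪kfun' i.1 i.2, kfun' j.1 j.2⟫_ℂ := by
    intro i j
    rw [← hrep, ← hrep', hker, hker']
  set Ψ : ((Λ × (EuclideanSpace ℂ (Fin n × Fin m))) →₀ ℂ) →ₗ[ℂ] H' :=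
    Finsupp.linearCombination ℂ
      (fun q : Λ × (EuclideanSpace ℂ (Fin n × Fin m)) => kfun' q.1 q.2) with hΨ
  set Φ : ((Λ × (EuclideanSpace ℂ (Fin n × Fin m))) →₀ ℂ) →ₗ[ℂ] H :=
    Finsupp.linearCombination ℂ
      (fun q : Λ × (EuclideanSpace ℂ (Fin n × Fin m)) => kfun (q.1, q.1) q.2) with hΦ
  have hgram : ∀ f g : (Λ × (EuclideanSpace ℂ (Fin n × Fin m))) →₀ ℂ,
      ⟪Φ f, Φ g⟫_ℂ = ⟪Ψ f, Ψ g⟫_ℂ := by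
    intro f g
    rw [hΨ, hΦ]
    simp only [Finsupp.linearCombination_apply, Finsupp.sum, sum_inner, inner_sum,
      inner_smul_left, inner_smul_right, hgen]
  have hle : LinearMap.ker Ψ ≤ LinearMap.ker Φ := by
    intro f hf
    rw [LinearMap.mem_ker] at hf ⊢
    rw [← inner_self_eq_zero (𝕜 := ℂ), hgram, hf, inner_zero_right]
  have hrange : LinearMap.range Ψ
      = Submodule.span ℂ {h : H' | ∃ (b : Λ) (x : EuclideanSpace ℂ (Fin n × Fin m)), h = kfun' b x} := by
    rw [hΨ, Finsupp.range_linearCombination]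
    congr 1
    ext h
    constructor
    · rintro ⟨⟨b, x⟩, rfl⟩; exact ⟨b, x, rfl⟩
    · rintro ⟨b, x, rfl⟩; exact ⟨(b, x), rfl⟩
  -- the isometry on the span
  set S₀ : ↥(LinearMap.range Ψ) →ₗ[ℂ] H :=
    ((LinearMap.ker Ψ).liftQ Φ hle).comp (Ψ.quotKerEquivRange).symm.toLinearMap with hS₀def
  have hS₀ : ∀ (f : (Λ × (EuclideanSpace ℂ (Fin n × Fin m))) →₀ ℂ) (hf : Ψ f ∈ LinearMap.range Ψ),
      S₀ ⟨Ψ f, hf⟩ = Φ f := by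
    intro f hf
    have he : (Ψ.quotKerEquivRange).symm ⟨Ψ f, hf⟩
        = Submodule.Quotient.mk f := by
      rw [LinearEquiv.symm_apply_eq]
      apply Subtype.ext
      exact (LinearMap.quotKerEquivRange_apply_mk Ψ f)
    rw [hS₀def]
    simp only [LinearMap.coe_comp, LinearEquiv.coe_coe, Function.comp_apply, he,
      Submodule.liftQ_apply]
  have hS₀inner : ∀ u w : ↥(LinearMap.range Ψ),
      ⟪S₀ u, S₀ w⟫_ℂ = ⟪(u : H'), (w : H')⟫_ℂ := by
    rintro ⟨-, f, rfl⟩ ⟨-, g, rfl⟩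
    rw [hS₀ f (LinearMap.mem_range_self Ψ f), hS₀ g (LinearMap.mem_range_self Ψ g)]
    exact hgram f g
  have hS₀norm : ∀ u : ↥(LinearMap.range Ψ), ‖S₀ u‖ = ‖u‖ := by
    intro u
    have h1 := hS₀inner u u
    rw [inner_self_eq_norm_sq_to_K, inner_self_eq_norm_sq_to_K] at h1
    have h2 : ‖S₀ u‖ ^ 2 = ‖(u : H')‖ ^ 2 := by exact_mod_cast h1
    have h3 : ‖S₀ u‖ = ‖(u : H')‖ := by
      have := congrArg Real.sqrt h2
      rwa [Real.sqrt_sq (norm_nonneg _), Real.sqrt_sq (norm_nonneg _)] at this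
    simpa using h3
  -- extend to all of H'
  have hdense : DenseRange ((LinearMap.range Ψ).subtypeL) := by
    have hd : Dense ((LinearMap.range Ψ : Submodule ℂ H') : Set H') :=
      Submodule.dense_iff_topologicalClosure_eq_top.mpr (by rw [hrange]; exact htot')
    have : Set.range ((LinearMap.range Ψ).subtypeL)
        = ((LinearMap.range Ψ : Submodule ℂ H') : Set H') := Subtype.range_coe
    rw [DenseRange, this]
    exact hd
  have huni : IsUniformInducing ((LinearMap.range Ψ).subtypeL) :=
    isometry_subtype_coe.isUniformInducing
  set S₁ : ↥(LinearMap.range Ψ) →ₗᵢ[ℂ] H := ⟨S₀, hS₀norm⟩ with hS₁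
  set S : H' →L[ℂ] H :=
    (S₁.toContinuousLinearMap).extend ((LinearMap.range Ψ).subtypeL) with hSdef
  have hSsub : ∀ u : ↥(LinearMap.range Ψ), S (u : H') = S₀ u := by
    intro u
    have := ContinuousLinearMap.extend_eq S₁.toContinuousLinearMap
      hdense huni u
    exact this
  have hSgen : ∀ (b : Λ) (x : EuclideanSpace ℂ (Fin n × Fin m)), S (kfun' b x) = kfun (b, b) x := by
    intro b x
    have h1 : Ψ (Finsupp.single (b, x) 1) = kfun' b x := by
      rw [hΨ, Finsupp.linearCombination_single, one_smul]
    have h2 : Φ (Finsupp.single (b, x) 1) = kfun (b, b) x := by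
      rw [hΦ, Finsupp.linearCombination_single, one_smul]
    have hmem : kfun' b x ∈ LinearMap.range Ψ := ⟨Finsupp.single (b, x) 1, h1⟩
    have hu : ((⟨kfun' b x, hmem⟩ : ↥(LinearMap.range Ψ)) : H') = kfun' b x := rfl
    rw [← hu, hSsub]
    have heq : (⟨kfun' b x, hmem⟩ : ↥(LinearMap.range Ψ))
        = ⟨Ψ (Finsupp.single (b, x) 1), LinearMap.mem_range_self Ψ _⟩ :=
      Subtype.ext h1.symm
    rw [heq, hS₀ _ (LinearMap.mem_range_self Ψ _), h2]
  have hSiso : ∀ y : H', ‖S y‖ = ‖y‖ := by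
    intro y
    refine hdense.induction_on y
      (isClosed_eq (continuous_norm.comp S.continuous) continuous_norm) ?_
    intro u
    have : ((LinearMap.range Ψ).subtypeL u) = (u : H') := rfl
    rw [this, hSsub u, hS₀norm u]
    rfl
  -- the coisometry
  refine ⟨ContinuousLinearMap.adjoint S, ?_, ?_, ?_, ?_⟩
  · intro y
    rw [ContinuousLinearMap.adjoint_adjoint]
    exact hSiso y
  · -- diagonal restriction formula
    intro F a
    apply ext_inner_right ℂ
    intro x
    rw [hrep', hrep]
    rw [ContinuousLinearMap.adjoint_inner_left, hSgen a x]
  · -- kernel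
    ext F
    simp only [LinearMap.mem_ker, Submodule.mem_iInf, LinearMap.coe_comp,
      Function.comp_apply, LinearMap.proj_apply, ContinuousLinearMap.coe_coe]
    constructor
    · intro h a
      have hdiag : ev' ((ContinuousLinearMap.adjoint S) F) a = ev F (a, a) := by
        apply ext_inner_right ℂ
        intro x
        rw [hrep', hrep]
        rw [ContinuousLinearMap.adjoint_inner_left, hSgen a x]
      rw [← hdiag, h]
      simp
    · intro h
      have hmemo : (ContinuousLinearMap.adjoint S) F
          ∈ (Submodule.span ℂ {h : H' | ∃ (b : Λ) (x : EuclideanSpace ℂ (Fin n × Fin m)), h = kfun' b x})ᗮ := by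
        rw [Submodule.mem_orthogonal]
        intro u hu
        induction hu using Submodule.span_induction with
        | mem u hu =>
          obtain ⟨b, x, rfl⟩ := hu
          rw [← inner_conj_symm, ContinuousLinearMap.adjoint_inner_left, hSgen b x,
            ← hrep F (b, b) x, h b]
          simp
        | zero => simp
        | add u w hu hw ihu ihw => rw [inner_add_left, ihu, ihw, add_zero]
        | smul c u hu ihu => rw [inner_smul_left, ihu, mul_zero]
      rw [Submodule.topologicalClosure_eq_top_iff.mp htot'] at hmemo
      simpa using hmemo
  · -- adjoint formula on elementary tensors
    intro μ x₁ x₂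
    rw [ContinuousLinearMap.adjoint_adjoint]
    exact hSgen μ _
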